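/- Let F be a field, N_1,...,N_n positive integers, and λ_{i,j}^k ∈ F fixed scalars. In the polynomial ring F[Z_{i,k} | 1 ≤ i ≤ n, 1 ≤ k ≤ N_i], let J be the ideal generated by the products Z_{i,j}·L_{i,j}. Then for each 1 ≤ i ≤ n, the product ∏_{k=1}^{N_i−1} (L_{i,N_i−k} + Z_{i,N_i−k+1} + ... + Z_{i,N_i−1}) is congruent to ∏_{k=1}^{N_i−1} L_{i,N_i−k} modulo J. -/
import Mathlib


open MvPolynomial Finset

/-- The variable `Z_{i, N i}` (top variable of the `i`-th block) in
`F[Z_{i,k} | 1 ≤ i ≤ n, 1 ≤ k ≤ N i]`; the index `⟨i, t⟩` with `t : Fin (N i)`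
represents the variable `Z_{i, t+1}`. -/
noncomputable def Ztop {F : Type} [Field F] {n : ℕ} (N : Fin n → ℕ) (hN : ∀ i, 0 < N i)
    (i : Fin n) : MvPolynomial ((i : Fin n) × Fin (N i)) F :=
  X ⟨i, ⟨N i - 1, Nat.sub_lt (hN i) Nat.one_pos⟩⟩

/-- The linear form `L_{i,j}` (at index `p = ⟨i, j-1⟩`):
`L_{i,N i} = Z_{i,1} + ⋯ + Z_{i,N i - 1} - Z_{i,N i} + ∑_{j ≠ i} λ⁰_{i,j} Z_{j,N j}`,
and for `1 ≤ k ≤ N i - 1`,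
`L_{i,k} = Z_{i,1} + ⋯ + Z_{i,k} - ∑_{j ≠ i} (λ^{N i - k}_{i,j} - λ⁰_{i,j}) Z_{j,N j}`. -/
noncomputable def Lform {F : Type} [Field F] {n : ℕ} (N : Fin n → ℕ) (hN : ∀ i, 0 < N i)
    (lam : Fin n → Fin n → ℕ → F) (p : (i : Fin n) × Fin (N i)) :
    MvPolynomial ((i : Fin n) × Fin (N i)) F :=
  if p.2.val + 1 = N p.1 then
    (∑ t ∈ univ.filter fun t : Fin (N p.1) => t.val + 1 < N p.1, X (⟨p.1, t⟩ : (i : Fin n) × Fin (N i)))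
      - X p
      + ∑ j ∈ univ.erase p.1, C (lam p.1 j 0) * Ztop N hN j
  else
    (∑ t ∈ univ.filter fun t : Fin (N p.1) => t.val ≤ p.2.val, X (⟨p.1, t⟩ : (i : Fin n) × Fin (N i)))
      - ∑ j ∈ univ.erase p.1,
          C (lam p.1 j (N p.1 - (p.2.val + 1)) - lam p.1 j 0) * Ztop N hN j

/-- For each `i`, the product
`∏_{k=1}^{N i - 1} (L_{i, N i - k} + Z_{i, N i - k + 1} + ⋯ + Z_{i, N i - 1})`
is congruent to `∏_{k=1}^{N i - 1} L_{i, N i - k}` modulo the ideal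
`J = ⟨Z_{i,j} · L_{i,j}⟩`. -/
theorem stmt12 (F : Type) [Field F] (n : ℕ) (N : Fin n → ℕ) (hN : ∀ i, 0 < N i)
    (lam : Fin n → Fin n → ℕ → F) :
    ∀ i : Fin n,
      (∏ k ∈ Finset.Icc 1 (N i - 1),
          (Lform N hN lam ⟨i, ⟨N i - k - 1, by have := hN i; omega⟩⟩
            + ∑ t ∈ univ.filter fun t : Fin (N i) =>
                N i - k ≤ t.val ∧ t.val + 1 < N i,
                X (⟨i, t⟩ : (i : Fin n) × Fin (N i))))
        - ∏ k ∈ Finset.Icc 1 (N i - 1),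
            Lform N hN lam ⟨i, ⟨N i - k - 1, by have := hN i; omega⟩⟩ ∈
      Ideal.span (Set.range fun p : (i : Fin n) × Fin (N i) =>
        X p * Lform N hN lam p) := by
  intro i
  have hNi := hN i
  set J := Ideal.span (Set.range fun p : (i : Fin n) × Fin (N i) =>
    X p * Lform N hN lam p) with hJ
  let A : ℕ → MvPolynomial ((i : Fin n) × Fin (N i)) F :=
    fun k => Lform N hN lam ⟨i, ⟨N i - k - 1, by omega⟩⟩
  let S : ℕ → MvPolynomial ((i : Fin n) × Fin (N i)) F :=
    fun k => ∑ t ∈ univ.filter fun t : Fin (N i) =>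
      N i - k ≤ t.val ∧ t.val + 1 < N i, X (⟨i, t⟩ : (i : Fin n) × Fin (N i))
  have key : ∀ m, m ≤ N i - 1 →
      (∏ k ∈ Finset.Icc 1 m, (A k + S k)) - (∏ k ∈ Finset.Icc 1 m, A k) ∈ J := by
    intro m
    induction m with
    | zero =>
      intro _
      simp
    | succ m ih =>
      intro hm
      have hm' : m ≤ N i - 1 := by omega
      rw [Finset.prod_Icc_succ_top (by omega), Finset.prod_Icc_succ_top (by omega)]
      have expand :
          (∏ k ∈ Finset.Icc 1 m, (A k + S k)) * (A (m+1) + S (m+1))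
            - (∏ k ∈ Finset.Icc 1 m, A k) * A (m+1)
          = ((∏ k ∈ Finset.Icc 1 m, (A k + S k)) - ∏ k ∈ Finset.Icc 1 m, A k)
              * (A (m+1) + S (m+1))
            + (∏ k ∈ Finset.Icc 1 m, A k) * S (m+1) := by ring
      rw [expand]
      refine Ideal.add_mem _ (Ideal.mul_mem_right _ _ (ih hm')) ?_
      show (∏ k ∈ Finset.Icc 1 m, A k) *
        (∑ t ∈ univ.filter fun t : Fin (N i) =>
          N i - (m+1) ≤ t.val ∧ t.val + 1 < N i, X (⟨i, t⟩ : (i : Fin n) × Fin (N i))) ∈ J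
      rw [Finset.mul_sum]
      refine Ideal.sum_mem _ ?_
      intro t ht
      simp only [Finset.mem_filter] at ht
      obtain ⟨-, h1, h2⟩ := ht
      set k := N i - 1 - t.val with hk
      have hk1 : 1 ≤ k := by omega
      have hk2 : k ≤ m := by omega
      have hAk : A k = Lform N hN lam ⟨i, t⟩ := by
        exact congrArg (Lform N hN lam)
          (congrArg (Sigma.mk i) (Fin.ext (show N i - k - 1 = t.val by omega)))
      rw [← Finset.mul_prod_erase _ A (Finset.mem_Icc.mpr ⟨hk1, hk2⟩)]
      have heq : (A k * ∏ x ∈ (Finset.Icc 1 m).erase k, A x) *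
          X (⟨i, t⟩ : (i : Fin n) × Fin (N i))
          = (X (⟨i, t⟩ : (i : Fin n) × Fin (N i)) * Lform N hN lam ⟨i, t⟩) *
            ∏ x ∈ (Finset.Icc 1 m).erase k, A x := by
        rw [hAk]; ring
      rw [heq]
      exact Ideal.mul_mem_right _ _ (Ideal.subset_span ⟨⟨i, t⟩, rfl⟩)
  exact key (N i - 1) le_rfl
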